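/- Let F : [0, T] → [0, ∞) be continuously differentiable with F(0) = 0, and suppose that for every ε ∈ (0, 1/2] there is a constant C (independent of ε) such that F'(t) ≤ C ε^{-1/2} F(t)^{1-ε} + C F(t) for all t ∈ [0, T]. Then F ≡ 0 on [0, T]. -/

import Mathlib

open Set

/-- If `H` is continuous on `[0,T]`, differentiable with derivative `≤ M`, then
`H t ≤ H 0 + M * t` on `[0,T]`. -/
lemma bound_from_deriv {T M : ℝ} (H H' : ℝ → ℝ)
    (hcont : ContinuousOn H (Icc 0 T))
    (hderiv : ∀ s ∈ Icc (0:ℝ) T, HasDerivAt H (H' s) s)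
    (hle : ∀ s ∈ Icc (0:ℝ) T, H' s ≤ M)
    {t : ℝ} (ht : t ∈ Icc (0:ℝ) T) :
    H t ≤ H 0 + M * t := by
  set K : ℝ → ℝ := fun s => H 0 + M * s - H s with hK
  have hKd : ∀ s ∈ Icc (0:ℝ) T, HasDerivAt K (M - H' s) s := by
    intro s hs
    have h1 : HasDerivAt (fun s : ℝ => H 0 + M * s) M s := by
      have h := (hasDerivAt_const s (H 0)).add ((hasDerivAt_id s).const_mul M)
      simp only [mul_one, zero_add] at h
      exact h
    exact h1.sub (hderiv s hs)
  have hmono : MonotoneOn K (Icc 0 T) := by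
    apply monotoneOn_of_deriv_nonneg (convex_Icc 0 T)
    · exact (continuousOn_const.add (continuousOn_const.mul continuousOn_id)).sub hcont
    · intro s hs
      exact ((hKd s (interior_subset hs)).differentiableAt).differentiableWithinAt
    · intro s hs
      rw [interior_Icc] at hs
      rw [(hKd s (Ioo_subset_Icc_self hs)).deriv]
      have := hle s (Ioo_subset_Icc_self hs)
      linarith
  have h0 : (0:ℝ) ∈ Icc (0:ℝ) T := ⟨le_refl 0, ht.1.trans ht.2⟩
  have h2 := hmono h0 ht ht.1
  simp only [hK, mul_zero, add_zero] at h2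
  linarith

theorem yudovich_uniqueness
    (T : ℝ) (hT : 0 < T)
    (F F' : ℝ → ℝ)
    (hF : ∀ t ∈ Icc (0:ℝ) T, HasDerivAt F (F' t) t)
    (hF'cont : ContinuousOn F' (Icc 0 T))
    (hFnonneg : ∀ t ∈ Icc (0:ℝ) T, 0 ≤ F t)
    (hF0 : F 0 = 0)
    (C : ℝ) (hC : 0 < C)
    (hineq : ∀ ε ∈ Ioc (0:ℝ) (1/2), ∀ t ∈ Icc (0:ℝ) T,
      F' t ≤ C * ε ^ (-(1:ℝ)/2) * (F t) ^ (1 - ε) + C * F t) :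
    ∀ t ∈ Icc (0:ℝ) T, F t = 0 := by
  intro t ht
  have hFt := hFnonneg t ht
  have hFcont : ContinuousOn F (Icc 0 T) :=
    fun s hs => (hF s hs).continuousAt.continuousWithinAt
  set K0 : ℝ := C * T * Real.exp (C * T / 2) with hK0
  have hK0pos : 0 < K0 := by positivity
  -- key estimate: (F t)^ε ≤ K0 * ε^{1/2}
  have key : ∀ ε ∈ Ioc (0:ℝ) (1/2), F t ^ ε ≤ K0 * ε ^ ((1:ℝ)/2) := by
    intro ε hεmem
    obtain ⟨hε0, hε2⟩ := hεmem
    set M : ℝ := C * ε ^ ((1:ℝ)/2) with hM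
    have hMpos : 0 < M := by positivity
    have hδstep : ∀ δ : ℝ, 0 < δ →
        F t ^ ε ≤ (δ ^ ε + M * T) * Real.exp (C * T / 2) := by
      intro δ hδ
      set G : ℝ → ℝ := fun s => (F s + δ) ^ ε with hGdef
      set H : ℝ → ℝ := fun s => G s * Real.exp (-(C * ε) * s) with hHdef
      set H' : ℝ → ℝ := fun s =>
        ε * (F s + δ) ^ (ε - 1) * F' s * Real.exp (-(C * ε) * s)
          + G s * (Real.exp (-(C * ε) * s) * (-(C * ε))) with hH'def
      have hapos : ∀ s ∈ Icc (0:ℝ) T, 0 < F s + δ := fun s hs => by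
        have := hFnonneg s hs; linarith
      have hHd : ∀ s ∈ Icc (0:ℝ) T, HasDerivAt H (H' s) s := by
        intro s hs
        have h1 : HasDerivAt (fun u => F u + δ) (F' s) s := (hF s hs).add_const δ
        have h2 : HasDerivAt (fun x : ℝ => x ^ ε) (ε * (F s + δ) ^ (ε - 1)) (F s + δ) :=
          Real.hasDerivAt_rpow_const (Or.inl (ne_of_gt (hapos s hs)))
        have hGd : HasDerivAt G (ε * (F s + δ) ^ (ε - 1) * F' s) s := by
          have := h2.comp s h1; exact this
        have hexp : HasDerivAt (fun u : ℝ => Real.exp (-(C * ε) * u))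
            (Real.exp (-(C * ε) * s) * (-(C * ε))) s := by
          have : HasDerivAt (fun u : ℝ => -(C * ε) * u) (-(C * ε)) s := by
            simpa using (hasDerivAt_id s).const_mul (-(C * ε))
          simpa using this.exp
        exact hGd.mul hexp
      have hHle : ∀ s ∈ Icc (0:ℝ) T, H' s ≤ M := by
        intro s hs
        have ha := hapos s hs
        have hFs := hFnonneg s hs
        set a : ℝ := F s + δ with hadef
        set e : ℝ := Real.exp (-(C * ε) * s) with hedef
        have he0 : 0 < e := Real.exp_pos _
        have he1 : e ≤ 1 := by
          rw [hedef, Real.exp_le_one_iff]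
          have : 0 ≤ C * ε * s := mul_nonneg (by positivity) hs.1
          linarith
        -- derivative bound on F'
        have hiq := hineq ε ⟨hε0, hε2⟩ s hs
        have hpow : F s ^ (1 - ε) ≤ a ^ (1 - ε) :=
          Real.rpow_le_rpow hFs (by linarith) (by linarith)
        have hFle : F s ≤ a := by linarith
        have hmulfac : (0:ℝ) ≤ ε * a ^ (ε - 1) := by positivity
        have h3 : ε * a ^ (ε - 1) * F' s
            ≤ ε * a ^ (ε - 1) * (C * ε ^ (-(1:ℝ)/2) * a ^ (1 - ε) + C * a) := by
          apply mul_le_mul_of_nonneg_left _ hmulfac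
          calc F' s ≤ C * ε ^ (-(1:ℝ)/2) * F s ^ (1 - ε) + C * F s := hiq
            _ ≤ C * ε ^ (-(1:ℝ)/2) * a ^ (1 - ε) + C * a := by
                have h4 : C * ε ^ (-(1:ℝ)/2) * F s ^ (1 - ε)
                    ≤ C * ε ^ (-(1:ℝ)/2) * a ^ (1 - ε) :=
                  mul_le_mul_of_nonneg_left hpow
                    (mul_nonneg hC.le (Real.rpow_nonneg hε0.le _))
                have h5 : C * F s ≤ C * a := mul_le_mul_of_nonneg_left hFle hC.le
                exact add_le_add h4 h5
        have hid1 : a ^ (ε - 1) * a ^ (1 - ε) = 1 := by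
          rw [← Real.rpow_add ha]
          norm_num
        have hid2 : a ^ (ε - 1) * a = a ^ ε := by
          nth_rewrite 2 [← Real.rpow_one a]
          rw [← Real.rpow_add ha]
          ring_nf
        have hid3 : ε * (C * ε ^ (-(1:ℝ)/2)) = M := by
          rw [hM]
          nth_rewrite 1 [← Real.rpow_one ε]
          rw [mul_comm (ε ^ (1:ℝ)), mul_assoc, ← Real.rpow_add hε0]
          norm_num
        have h6 : ε * a ^ (ε - 1) * (C * ε ^ (-(1:ℝ)/2) * a ^ (1 - ε) + C * a)
            = M + C * ε * a ^ ε := by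
          have expand : ε * a ^ (ε - 1) * (C * ε ^ (-(1:ℝ)/2) * a ^ (1 - ε) + C * a)
              = ε * (C * ε ^ (-(1:ℝ)/2)) * (a ^ (ε - 1) * a ^ (1 - ε))
                + C * ε * (a ^ (ε - 1) * a) := by ring
          rw [expand, hid1, hid2, hid3]; ring
        have h7 : ε * a ^ (ε - 1) * F' s ≤ M + C * ε * a ^ ε := by
          rw [← h6]; exact h3
        have hHval : H' s = e * (ε * a ^ (ε - 1) * F' s - C * ε * a ^ ε) := by
          simp only [hH'def, hGdef, ← hadef, ← hedef]; ring
        rw [hHval]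
        calc e * (ε * a ^ (ε - 1) * F' s - C * ε * a ^ ε)
            ≤ e * M := by
              apply mul_le_mul_of_nonneg_left _ he0.le
              linarith
          _ ≤ 1 * M := mul_le_mul_of_nonneg_right he1 hMpos.le
          _ = M := one_mul M
      have hHcont : ContinuousOn H (Icc 0 T) := by
        apply ContinuousOn.mul
        · apply ContinuousOn.rpow_const (hFcont.add continuousOn_const)
          intro x hx
          exact Or.inl (ne_of_gt (hapos x hx))
        · exact (Real.continuous_exp.comp (continuous_const.mul continuous_id)).continuousOn
      have hbound := bound_from_deriv H H' hHcont hHd hHle ht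
      have hH0 : H 0 = δ ^ ε := by
        simp only [hHdef, hGdef, hF0, zero_add, mul_zero, Real.exp_zero, mul_one]
      rw [hH0] at hbound
      -- H t ≤ δ^ε + M t, so G t ≤ (δ^ε + M t) * exp(Cεt)
      have hexppos : 0 < Real.exp (-(C * ε) * t) := Real.exp_pos _
      have hGt : G t ≤ (δ ^ ε + M * t) * Real.exp (C * ε * t) := by
        have h8 : G t * Real.exp (-(C * ε) * t) ≤ δ ^ ε + M * t := hbound
        have h9 := mul_le_mul_of_nonneg_right h8 (Real.exp_pos (C * ε * t)).le
        calc G t = G t * Real.exp (-(C * ε) * t) * Real.exp (C * ε * t) := by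
              rw [mul_assoc, ← Real.exp_add]; ring_nf; simp
          _ ≤ (δ ^ ε + M * t) * Real.exp (C * ε * t) := h9
      have hFG : F t ^ ε ≤ G t :=
        Real.rpow_le_rpow hFt (by linarith) hε0.le
      have hfinal : (δ ^ ε + M * t) * Real.exp (C * ε * t)
          ≤ (δ ^ ε + M * T) * Real.exp (C * T / 2) := by
        have ht0 := ht.1
        have htT := ht.2
        have hb1 : δ ^ ε + M * t ≤ δ ^ ε + M * T := by
          have := mul_le_mul_of_nonneg_left htT hMpos.le
          linarith
        have hb2 : Real.exp (C * ε * t) ≤ Real.exp (C * T / 2) := by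
          apply Real.exp_le_exp.mpr
          have h10 : C * ε * t ≤ C * (1/2) * T := by
            have h11 : ε * t ≤ (1/2) * T := by
              calc ε * t ≤ (1/2) * t := mul_le_mul_of_nonneg_right hε2 ht0
                _ ≤ (1/2) * T := by linarith
            calc C * ε * t = C * (ε * t) := by ring
              _ ≤ C * ((1/2) * T) := mul_le_mul_of_nonneg_left h11 hC.le
              _ = C * (1/2) * T := by ring
          linarith
        have hnn : (0:ℝ) ≤ δ ^ ε + M * t := by
          have : (0:ℝ) ≤ δ ^ ε := Real.rpow_nonneg hδ.le ε
          have : (0:ℝ) ≤ M * t := mul_nonneg hMpos.le ht0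
          positivity
        exact mul_le_mul hb1 hb2 (Real.exp_pos _).le (by positivity)
      linarith
    -- take δ → 0⁺
    have hlim : Filter.Tendsto (fun δ : ℝ => (δ ^ ε + M * T) * Real.exp (C * T / 2))
        (nhdsWithin 0 (Ioi 0)) (nhds ((0 + M * T) * Real.exp (C * T / 2))) := by
      apply Filter.Tendsto.mul_const
      apply Filter.Tendsto.add_const
      have hc : ContinuousAt (fun x : ℝ => x ^ ε) 0 :=
        Real.continuousAt_rpow_const 0 ε (Or.inr hε0.le)
      have := hc.continuousWithinAt (s := Ioi 0)
      rw [ContinuousWithinAt] at this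
      simpa [Real.zero_rpow (ne_of_gt hε0)] using this
    have hev : ∀ᶠ δ in nhdsWithin (0:ℝ) (Ioi 0),
        F t ^ ε ≤ (δ ^ ε + M * T) * Real.exp (C * T / 2) := by
      filter_upwards [self_mem_nhdsWithin] with δ hδ
      exact hδstep δ hδ
    have h12 : F t ^ ε ≤ (0 + M * T) * Real.exp (C * T / 2) := ge_of_tendsto hlim hev
    calc F t ^ ε ≤ (0 + M * T) * Real.exp (C * T / 2) := h12
      _ = K0 * ε ^ ((1:ℝ)/2) := by rw [hK0, hM]; ring
  -- now conclude F t = 0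
  have hsmall : ∀ η : ℝ, 0 < η → F t ≤ η := by
    intro η hη
    obtain ⟨n, hn⟩ := exists_pow_lt_of_lt_one hη (by norm_num : (1/2:ℝ) < 1)
    set ε : ℝ := min (1/2) (min ((1:ℝ)/((n:ℝ)+1)) ((1/(2*K0))^2)) with hεdef
    have hε0 : 0 < ε := by
      apply lt_min (by norm_num)
      exact lt_min (by positivity) (by positivity)
    have hεmem : ε ∈ Ioc (0:ℝ) (1/2) := ⟨hε0, min_le_left _ _⟩
    have h1 := key ε hεmem
    have hεle : ε ≤ (1/(2*K0))^2 := le_trans (min_le_right _ _) (min_le_right _ _)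
    have h2 : ε ^ ((1:ℝ)/2) ≤ 1/(2*K0) := by
      have := Real.rpow_le_rpow hε0.le hεle (by norm_num : (0:ℝ) ≤ 1/2)
      have hid : (((1/(2*K0))^2 : ℝ)) ^ ((1:ℝ)/2) = 1/(2*K0) := by
        rw [← Real.rpow_natCast (1/(2*K0)) 2, ← Real.rpow_mul (by positivity)]
        norm_num
      rwa [hid] at this
    have h3 : K0 * ε ^ ((1:ℝ)/2) ≤ 1/2 := by
      have := mul_le_mul_of_nonneg_left h2 hK0pos.le
      have hne : K0 ≠ 0 := ne_of_gt hK0pos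
      calc K0 * ε ^ ((1:ℝ)/2) ≤ K0 * (1/(2*K0)) := this
        _ = 1/2 := by field_simp
    have h4 : F t ≤ (K0 * ε ^ ((1:ℝ)/2)) ^ ε⁻¹ := by
      have := Real.rpow_le_rpow (Real.rpow_nonneg hFt ε) h1 (inv_nonneg.mpr hε0.le)
      rwa [Real.rpow_rpow_inv hFt (ne_of_gt hε0)] at this
    have h5 : (K0 * ε ^ ((1:ℝ)/2)) ^ ε⁻¹ ≤ ((1:ℝ)/2) ^ ε⁻¹ :=
      Real.rpow_le_rpow (by positivity) h3 (by positivity)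
    have hnle : (n:ℝ) ≤ ε⁻¹ := by
      have hεle2 : ε ≤ 1/((n:ℝ)+1) := le_trans (min_le_right _ _) (min_le_left _ _)
      have hpos : (0:ℝ) < 1/((n:ℝ)+1) := by positivity
      have := one_div_le_one_div_of_le hε0 hεle2
      rw [one_div_one_div] at this
      rw [← one_div]
      linarith [this, Nat.cast_nonneg (α := ℝ) n]
    have h6 : ((1:ℝ)/2) ^ ε⁻¹ ≤ ((1:ℝ)/2) ^ (n:ℝ) :=
      Real.rpow_le_rpow_of_exponent_ge (by norm_num) (by norm_num) hnle
    have h7 : ((1:ℝ)/2) ^ ((n:ℝ)) = ((1:ℝ)/2) ^ n := Real.rpow_natCast _ n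
    calc F t ≤ (K0 * ε ^ ((1:ℝ)/2)) ^ ε⁻¹ := h4
      _ ≤ ((1:ℝ)/2) ^ ε⁻¹ := h5
      _ ≤ ((1:ℝ)/2) ^ (n:ℝ) := h6
      _ = ((1:ℝ)/2) ^ n := h7
      _ ≤ η := hn.le
  have : F t ≤ 0 := by
    by_contra h
    push_neg at h
    have := hsmall (F t / 2) (by linarith)
    linarith
  linarith
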